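/- There exist a positive operator A, a unitary U, and an operator T on ℂ² such that Δ²_{T*,T}(A) = 0 but, with S = UT (or S defined via the unitary), Δ²_{S*,S}(A) ≠ 0. Concretely, with T = [[1,1],[0,1]], A = [[0,0],[0,1]], U = [[0,1],[i,0]], and S = UT, one has Δ²_{T*,T}(A) = A − 2T*AT + T*²AT² = 0 while Δ²_{S*,S}(A) ≠ 0. -/

import Mathlib

open Matrix
open scoped ComplexOrder

theorem stmt12 :
    ∃ (A U T : Matrix (Fin 2) (Fin 2) ℂ),
      A.PosSemidef ∧ U ∈ Matrix.unitaryGroup (Fin 2) ℂ ∧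
      A = !![0, 0; 0, 1] ∧ T = !![1, 1; 0, 1] ∧ U = !![0, 1; Complex.I, 0] ∧
      (A - (2 : ℂ) • (Tᴴ * A * T) + (Tᴴ) ^ 2 * A * T ^ 2 = 0) ∧
      ¬ (A - (2 : ℂ) • ((U * T)ᴴ * A * (U * T)) + ((U * T)ᴴ) ^ 2 * A * (U * T) ^ 2 = 0) := by
  refine ⟨!![0, 0; 0, 1], !![0, 1; Complex.I, 0], !![1, 1; 0, 1], ?_, ?_, rfl, rfl, rfl, ?_, ?_⟩
  · rw [Matrix.posSemidef_iff_dotProduct_mulVec]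
    constructor
    · ext i j
      fin_cases i <;> fin_cases j <;> simp [conjTranspose, Matrix.map]
    · intro x
      have : (star x ⬝ᵥ !![(0:ℂ), 0; 0, 1].mulVec x) = star (x 1) * x 1 := by
        simp [dotProduct, mulVec, Fin.sum_univ_two]
      rw [this]
      simpa using (star_mul_self_nonneg (x 1))
  · constructor <;>
    · ext i j
      fin_cases i <;> fin_cases j <;>
        simp [Matrix.mul_apply, Fin.sum_univ_two, star, Matrix.one_apply, Complex.ext_iff]
  · ext i j
    fin_cases i <;> fin_cases j <;>
      simp [pow_two, Matrix.mul_apply, Fin.sum_univ_two, Matrix.conjTranspose_apply] <;> ring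
  · intro h
    have := congrFun (congrFun h 0) 0
    simp [pow_two, Matrix.mul_apply, Fin.sum_univ_two, Matrix.conjTranspose_apply,
      Complex.ext_iff] at this
    norm_num at this
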